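/- Let Φ be a dictionary with unit-norm columns, y = Φ_I x_I with x_{i_k} = c_k σ_k for strictly positive c_k and signs σ_k ∈ {±1}. If ‖(Φ_I*Φ_I − I)x_I‖_∞ < ‖c‖_min/2 and ‖Φ_{I^c}*Φ_I x_I‖_∞ < ‖c‖_min/2, then min_{i∈I}|⟨φ_i, y⟩| > max_{j∉I}|⟨φ_j, y⟩|, i.e., thresholding with sparsity |I| recovers the support I. -/
import Mathlib


open Matrix
open scoped BigOperators

theorem stmt12 {d K : ℕ} (Φ : Matrix (Fin d) (Fin K) ℝ)
    (hunit : ∀ k, ∑ i, Φ i k ^ 2 = 1)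
    (I : Finset (Fin K)) (hI : I.Nonempty) (c σ : Fin K → ℝ)
    (hc : ∀ i ∈ I, 0 < c i) (hσ : ∀ i ∈ I, σ i = 1 ∨ σ i = -1)
    (h1 : ∀ i ∈ I,
      |∑ j ∈ I, (Φᵀ * Φ - 1 : Matrix (Fin K) (Fin K) ℝ) i j * (c j * σ j)| < I.inf' hI c / 2)
    (h2 : ∀ k, k ∉ I →
      |∑ j ∈ I, (Φᵀ * Φ : Matrix (Fin K) (Fin K) ℝ) k j * (c j * σ j)| < I.inf' hI c / 2) :
    ∀ i ∈ I, ∀ k, k ∉ I →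
      |∑ row, Φ row k * ∑ j ∈ I, Φ row j * (c j * σ j)| <
        |∑ row, Φ row i * ∑ j ∈ I, Φ row j * (c j * σ j)| := by
  set m := I.inf' hI c with hm
  have key : ∀ k, ∑ row, Φ row k * ∑ j ∈ I, Φ row j * (c j * σ j)
      = ∑ j ∈ I, (Φᵀ * Φ : Matrix (Fin K) (Fin K) ℝ) k j * (c j * σ j) := by
    intro k
    simp only [Matrix.mul_apply, Matrix.transpose_apply, Finset.mul_sum, Finset.sum_mul]
    rw [Finset.sum_comm]
    apply Finset.sum_congr rfl
    intro j _
    apply Finset.sum_congr rfl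
    intro r _
    ring
  intro i hi k hk
  rw [key i, key k]
  have hmpos : 0 < m := by
    obtain ⟨a, ha, hEq⟩ := Finset.exists_mem_eq_inf' hI c
    rw [hm, hEq]; exact hc a ha
  have hmi : m ≤ c i := Finset.inf'_le c hi
  -- decompose on-support sum
  have hsplit : ∑ j ∈ I, (Φᵀ * Φ : Matrix (Fin K) (Fin K) ℝ) i j * (c j * σ j)
      = (∑ j ∈ I, (Φᵀ * Φ - 1 : Matrix (Fin K) (Fin K) ℝ) i j * (c j * σ j)) + c i * σ i := by
    have hone : ∑ j ∈ I, (1 : Matrix (Fin K) (Fin K) ℝ) i j * (c j * σ j) = c i * σ i := by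
      rw [Finset.sum_eq_single i]
      · simp [Matrix.one_apply]
      · intro b _ hb
        simp [Matrix.one_apply, (Ne.symm hb)]
      · intro h; exact absurd hi h
    rw [← hone, ← Finset.sum_add_distrib]
    apply Finset.sum_congr rfl
    intro j _
    simp [Matrix.sub_apply]; ring
  have hσi : |σ i| = 1 := by rcases hσ i hi with h | h <;> simp [h]
  have habs : |c i * σ i| = c i := by
    rw [abs_mul, hσi, mul_one, abs_of_pos (hc i hi)]
  have hlb : m / 2 < |∑ j ∈ I, (Φᵀ * Φ : Matrix (Fin K) (Fin K) ℝ) i j * (c j * σ j)| := by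
    rw [hsplit]
    have h1i := h1 i hi
    have := abs_add_le (∑ j ∈ I, (Φᵀ * Φ - 1 : Matrix (Fin K) (Fin K) ℝ) i j * (c j * σ j))
      (c i * σ i)
    have htri : |c i * σ i| - |∑ j ∈ I, (Φᵀ * Φ - 1 : Matrix (Fin K) (Fin K) ℝ) i j * (c j * σ j)|
        ≤ |(∑ j ∈ I, (Φᵀ * Φ - 1 : Matrix (Fin K) (Fin K) ℝ) i j * (c j * σ j)) + c i * σ i| := by
      have := abs_sub_abs_le_abs_sub (c i * σ i)
        (-(∑ j ∈ I, (Φᵀ * Φ - 1 : Matrix (Fin K) (Fin K) ℝ) i j * (c j * σ j)))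
      simp only [abs_neg, sub_neg_eq_add] at this
      rw [add_comm (c i * σ i)] at this
      exact this
    rw [habs] at htri
    linarith
  exact lt_trans (h2 k hk) hlb
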